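/- Asymptotic mean calibration: let f* = E(Y|X) with ‖f*‖_∞ ≤ M, E|Y|^{1+ε} < ∞, σ ≥ max(2M,1), and p_σ(t) = ψ(t²/σ²) strongly mean-calibrated with c₀ = -ψ'(0). Then for any measurable f with ‖f‖_∞ ≤ M, |σ²[𝒢_σ(f*) - 𝒢_σ(f)] - c₀‖f - f*‖²_{2,ρ}| ≤ c_ε·σ^{-θ_ε}, where θ_ε = min(ε,2), ‖f-f*‖²_{2,ρ} = E(f(X)-f*(X))², 𝒢_σ(g) = E p_σ(Y - g(X)), and c_ε = 6M(L₃+c₀)E|2Y|^{1+ε} + 16ML₂(E|Y|^{min(1+ε,3)} + M³). -/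

import Mathlib

open MeasureTheory

section AuxStmt13
open Set

lemma taylor_aux {ψ ψ' : ℝ → ℝ} {L₂ : ℝ}
    (hderiv : ∀ t ∈ Set.Ico (0 : ℝ) 1, HasDerivWithinAt ψ (ψ' t) (Set.Ico (0 : ℝ) 1) t)
    (hL₂ : ∀ s ∈ Set.Ico (0 : ℝ) 1, ∀ t ∈ Set.Ico (0 : ℝ) 1, |ψ' s - ψ' t| ≤ L₂ * |s - t|) :
    ∀ u ∈ Set.Ico (0 : ℝ) 1, ∀ v ∈ Set.Ico (0 : ℝ) 1,
      |ψ u - ψ v - ψ' 0 * (u - v)| ≤ L₂ / 2 * |u ^ 2 - v ^ 2| := by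
  have hint : interior (Set.Ico (0 : ℝ) 1) = Set.Ioo 0 1 := interior_Ico
  have hcont : ContinuousOn ψ (Set.Ico (0 : ℝ) 1) :=
    fun t ht => (hderiv t ht).continuousWithinAt
  have hd' : ∀ t ∈ Set.Ioo (0 : ℝ) 1, |ψ' t - ψ' 0| ≤ L₂ * t := by
    intro t ht
    have := hL₂ t (Set.mem_Ico.2 ⟨ht.1.le, ht.2⟩) 0 (Set.mem_Ico.2 ⟨le_rfl, one_pos⟩)
    simpa [abs_of_nonneg ht.1.le] using this
  -- F monotone
  have hF : MonotoneOn (fun t => ψ t - ψ' 0 * t + L₂ / 2 * t ^ 2) (Set.Ico (0 : ℝ) 1) := by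
    apply monotoneOn_of_hasDerivWithinAt_nonneg (convex_Ico 0 1)
      (f' := fun t => ψ' t - ψ' 0 + L₂ * t)
    · exact (hcont.sub (continuousOn_const.mul continuousOn_id)).add
        (continuousOn_const.mul (continuousOn_pow 2))
    · intro t ht
      rw [hint] at ht ⊢
      have h1 : HasDerivWithinAt ψ (ψ' t) (Set.Ioo (0:ℝ) 1) t :=
        (hderiv t (Set.mem_Ico.2 ⟨ht.1.le, ht.2⟩)).mono Set.Ioo_subset_Ico_self
      have h2 : HasDerivWithinAt (fun t : ℝ => ψ' 0 * t) (ψ' 0) (Set.Ioo (0:ℝ) 1) t := by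
        simpa using (hasDerivWithinAt_id t _).const_mul (ψ' 0)
      have h3 : HasDerivWithinAt (fun t : ℝ => L₂ / 2 * t ^ 2) (L₂ * t) (Set.Ioo (0:ℝ) 1) t := by
        have := ((hasDerivWithinAt_id t (Set.Ioo (0:ℝ) 1)).pow 2).const_mul (L₂ / 2)
        convert this using 1
        exacts [rfl, rfl, rfl, by simp; ring]
      exact (h1.sub h2).add h3
    · intro t ht
      rw [hint] at ht
      have := (abs_le.1 (hd' t ht)).1
      linarith
  -- G antitone
  have hG : AntitoneOn (fun t => ψ t - ψ' 0 * t - L₂ / 2 * t ^ 2) (Set.Ico (0 : ℝ) 1) := by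
    apply antitoneOn_of_hasDerivWithinAt_nonpos (convex_Ico 0 1)
      (f' := fun t => ψ' t - ψ' 0 - L₂ * t)
    · exact (hcont.sub (continuousOn_const.mul continuousOn_id)).sub
        (continuousOn_const.mul (continuousOn_pow 2))
    · intro t ht
      rw [hint] at ht ⊢
      have h1 : HasDerivWithinAt ψ (ψ' t) (Set.Ioo (0:ℝ) 1) t :=
        (hderiv t (Set.mem_Ico.2 ⟨ht.1.le, ht.2⟩)).mono Set.Ioo_subset_Ico_self
      have h2 : HasDerivWithinAt (fun t : ℝ => ψ' 0 * t) (ψ' 0) (Set.Ioo (0:ℝ) 1) t := by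
        simpa using (hasDerivWithinAt_id t _).const_mul (ψ' 0)
      have h3 : HasDerivWithinAt (fun t : ℝ => L₂ / 2 * t ^ 2) (L₂ * t) (Set.Ioo (0:ℝ) 1) t := by
        have := ((hasDerivWithinAt_id t (Set.Ioo (0:ℝ) 1)).pow 2).const_mul (L₂ / 2)
        convert this using 1
        exacts [rfl, rfl, rfl, by simp; ring]
      exact (h1.sub h2).sub h3
    · intro t ht
      rw [hint] at ht
      have := (abs_le.1 (hd' t ht)).2
      linarith
  -- conclude
  have main : ∀ u ∈ Set.Ico (0:ℝ) 1, ∀ v ∈ Set.Ico (0:ℝ) 1, v ≤ u →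
      |ψ u - ψ v - ψ' 0 * (u - v)| ≤ L₂ / 2 * (u ^ 2 - v ^ 2) := by
    intro u hu v hv hvu
    have h1 := hF hv hu hvu
    have h2 := hG hv hu hvu
    simp only at h1 h2
    rw [abs_le]
    constructor <;> nlinarith
  intro u hu v hv
  rcases le_total v u with h | h
  · rw [abs_of_nonneg (by nlinarith [hu.1, hv.1] : (0:ℝ) ≤ u ^ 2 - v ^ 2)]
    exact main u hu v hv h
  · rw [show ψ u - ψ v - ψ' 0 * (u - v) = -(ψ v - ψ u - ψ' 0 * (v - u)) by ring, abs_neg,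
      show |u ^ 2 - v ^ 2| = |v ^ 2 - u ^ 2| from abs_sub_comm _ _,
      abs_of_nonneg (by nlinarith [hu.1, hv.1] : (0:ℝ) ≤ v ^ 2 - u ^ 2)]
    exact main v hv u hu h

set_option maxHeartbeats 1000000 in
lemma caseA_aux {ψ : ℝ → ℝ} {ψ'0 L₁ L₂ ε M σ y A F : ℝ}
    (hε : 0 < ε) (hM : 0 < M)
    (hσ1 : (1:ℝ) ≤ σ) (hσ0 : (0:ℝ) < σ) (hMσ : 2 * M ≤ σ)
    (hA : |A| ≤ M) (hF : |F| ≤ M)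
    (hψ'0 : ψ'0 < 0) (hL₂0 : 0 ≤ L₂) (hL₁0 : 0 ≤ L₁)
    (htaylor : ∀ u ∈ Set.Ico (0:ℝ) 1, ∀ v ∈ Set.Ico (0:ℝ) 1,
      |ψ u - ψ v - ψ'0 * (u - v)| ≤ L₂ / 2 * |u ^ 2 - v ^ 2|)
    {c₀ θ mm a b : ℝ}
    (hc₀def : c₀ = -ψ'0) (hθdef : θ = min ε 2) (hmmdef : mm = min (1 + ε) 3)
    (hc₀ : 0 < c₀) (hθ0 : 0 < θ) (hθ2 : θ ≤ 2) (hθε : θ ≤ ε)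
    (hmm1 : 1 ≤ mm) (hmm3mm : 3 - mm = 2 - θ)
    (hσθ : (0:ℝ) ≤ σ ^ (-θ))
    (hadef : a = y - A) (hbdef : b = y - F)
    (hab : |a - b| ≤ 2 * M) (haa : |a| ≤ |y| + M) (hbb : |b| ≤ |y| + M)
    (habsum : |a + b| ≤ 2 * |y| + 2 * M)
    (hy : |y| < σ / 2) :
    |σ ^ 2 * (ψ (a ^ 2 / σ ^ 2) - ψ (b ^ 2 / σ ^ 2)) - c₀ * (b ^ 2 - a ^ 2)| ≤
      6 * M * (max (L₂ + -ψ'0) (L₁ / 2) + -ψ'0) * |2 * y| ^ (1 + ε) * σ ^ (-θ) +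
        16 * M * L₂ * (|y| ^ mm + M ^ 3) * σ ^ (-θ) := by
  have hMhalf : M ≤ σ / 2 := by linarith
  have habs : ∀ c : ℝ, |c| ≤ |y| + M → c ^ 2 / σ ^ 2 ∈ Set.Ico (0:ℝ) 1 := by
    intro c hc
    constructor
    · positivity
    · rw [div_lt_one (by positivity)]
      have h1 : |c| < σ := by linarith
      calc c ^ 2 = |c| ^ 2 := (sq_abs c).symm
        _ < σ ^ 2 := by nlinarith [abs_nonneg c]
  have hu := habs a haa
  have hv := habs b hbb
  have key := htaylor _ hu _ hv
  have hid : σ ^ 2 * (a ^ 2 / σ ^ 2 - b ^ 2 / σ ^ 2) = a ^ 2 - b ^ 2 := by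
    field_simp
  have hmain : σ ^ 2 * (ψ (a ^ 2 / σ ^ 2) - ψ (b ^ 2 / σ ^ 2)) - c₀ * (b ^ 2 - a ^ 2) =
      σ ^ 2 * (ψ (a ^ 2 / σ ^ 2) - ψ (b ^ 2 / σ ^ 2) -
        ψ'0 * (a ^ 2 / σ ^ 2 - b ^ 2 / σ ^ 2)) := by
    have hσne : σ ≠ 0 := by positivity
    rw [hc₀def]
    field_simp
    ring
  have hsq : |(a ^ 2 / σ ^ 2) ^ 2 - (b ^ 2 / σ ^ 2) ^ 2| = |a ^ 4 - b ^ 4| / σ ^ 4 := by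
    rw [show (a ^ 2 / σ ^ 2) ^ 2 - (b ^ 2 / σ ^ 2) ^ 2 = (a ^ 4 - b ^ 4) / σ ^ 4 by ring,
      abs_div, abs_of_pos (by positivity : (0:ℝ) < σ ^ 4)]
  have h4 : |a ^ 4 - b ^ 4| ≤ 8 * M * (|y| + M) ^ 3 := by
    rw [show a ^ 4 - b ^ 4 = (a - b) * (a + b) * (a ^ 2 + b ^ 2) by ring, abs_mul, abs_mul]
    have ha2 : a ^ 2 ≤ (|y| + M) ^ 2 := by
      rw [← sq_abs]; exact pow_le_pow_left₀ (abs_nonneg a) haa 2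
    have hb2 : b ^ 2 ≤ (|y| + M) ^ 2 := by
      rw [← sq_abs]; exact pow_le_pow_left₀ (abs_nonneg b) hbb 2
    have h3 : a ^ 2 + b ^ 2 ≤ 2 * (|y| + M) ^ 2 := by linarith
    have hrw : |a ^ 2 + b ^ 2| = a ^ 2 + b ^ 2 := abs_of_nonneg (by positivity)
    rw [hrw]
    calc |a - b| * |a + b| * (a ^ 2 + b ^ 2)
        ≤ (2 * M) * (2 * |y| + 2 * M) * (2 * (|y| + M) ^ 2) := by
          apply mul_le_mul _ h3 (by positivity) (by positivity)
          exact mul_le_mul hab habsum (abs_nonneg _) (by positivity)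
      _ = 8 * M * (|y| + M) ^ 3 := by ring
  -- step2: (|y|+M)^3 ≤ 4(|y|^mm + M^3) σ^(2-θ)
  have hcube : (|y| + M) ^ 3 ≤ 4 * (|y| ^ mm + M ^ 3) * σ ^ (2 - θ) := by
    have hexp : (0:ℝ) ≤ 2 - θ := by linarith
    have hrp1 : (1:ℝ) ≤ σ ^ (2 - θ) := Real.one_le_rpow hσ1 hexp
    have hy3 : |y| ^ 3 ≤ |y| ^ mm * σ ^ (2 - θ) := by
      rcases eq_or_lt_of_le (abs_nonneg y) with h0 | h0
      · rw [← h0]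
        rw [show (0:ℝ) ^ 3 = 0 by norm_num]
        positivity
      · have h1 : (|y|:ℝ) ^ (3:ℝ) = |y| ^ mm * |y| ^ (3 - mm) := by
          rw [← Real.rpow_add h0]; norm_num
        have h2 : |y| ^ (3 - mm) ≤ σ ^ (3 - mm) :=
          Real.rpow_le_rpow (abs_nonneg y) (by linarith) (by rw [hmm3mm]; linarith)
        calc |y| ^ 3 = |y| ^ ((3:ℕ):ℝ) := (Real.rpow_natCast _ 3).symm
          _ = |y| ^ (3:ℝ) := by norm_num
          _ = |y| ^ mm * |y| ^ (3 - mm) := h1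
          _ ≤ |y| ^ mm * σ ^ (3 - mm) := by
              apply mul_le_mul_of_nonneg_left h2 (Real.rpow_nonneg (abs_nonneg y) _)
          _ = |y| ^ mm * σ ^ (2 - θ) := by rw [hmm3mm]
    have hM3 : M ^ 3 ≤ M ^ 3 * σ ^ (2 - θ) := le_mul_of_one_le_right (by positivity) hrp1
    have hbin : (|y| + M) ^ 3 ≤ 4 * (|y| ^ 3 + M ^ 3) := by
      nlinarith [mul_nonneg (sq_nonneg (|y| - M)) (abs_nonneg y),
        mul_nonneg (sq_nonneg (|y| - M)) hM.le]
    calc (|y| + M) ^ 3 ≤ 4 * (|y| ^ 3 + M ^ 3) := hbin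
      _ ≤ 4 * (|y| ^ mm * σ ^ (2 - θ) + M ^ 3 * σ ^ (2 - θ)) := by linarith
      _ = 4 * (|y| ^ mm + M ^ 3) * σ ^ (2 - θ) := by ring
  -- put together
  have hsplit : σ ^ (2 - θ) = σ ^ 2 * σ ^ (-θ) := by
    rw [show (2:ℝ) - θ = 2 + (-θ) by ring, Real.rpow_add hσ0]
    norm_num [Real.rpow_natCast]
  have hfirst : (0:ℝ) ≤ 6 * M * (max (L₂ + -ψ'0) (L₁ / 2) + -ψ'0) * |2 * y| ^ (1 + ε) * σ ^ (-θ) := by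
    have hmax : 0 ≤ max (L₂ + -ψ'0) (L₁ / 2) + -ψ'0 := by
      have : L₂ + -ψ'0 ≤ max (L₂ + -ψ'0) (L₁ / 2) := le_max_left _ _
      nlinarith
    have := Real.rpow_nonneg (abs_nonneg (2 * y)) (1 + ε)
    positivity
  rw [hmain]
  calc |σ ^ 2 * (ψ (a ^ 2 / σ ^ 2) - ψ (b ^ 2 / σ ^ 2) -
        ψ'0 * (a ^ 2 / σ ^ 2 - b ^ 2 / σ ^ 2))|
      = σ ^ 2 * |ψ (a ^ 2 / σ ^ 2) - ψ (b ^ 2 / σ ^ 2) -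
        ψ'0 * (a ^ 2 / σ ^ 2 - b ^ 2 / σ ^ 2)| := by
        rw [abs_mul, abs_of_pos (by positivity : (0:ℝ) < σ ^ 2)]
    _ ≤ σ ^ 2 * (L₂ / 2 * (|a ^ 4 - b ^ 4| / σ ^ 4)) := by
        rw [← hsq]
        exact mul_le_mul_of_nonneg_left key (by positivity)
    _ = L₂ / 2 * |a ^ 4 - b ^ 4| / σ ^ 2 := by
        field_simp
    _ ≤ L₂ / 2 * (8 * M * (|y| + M) ^ 3) / σ ^ 2 := by
        apply div_le_div_of_nonneg_right _ (by positivity)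
        exact mul_le_mul_of_nonneg_left h4 (by positivity)
    _ ≤ L₂ / 2 * (8 * M * (4 * (|y| ^ mm + M ^ 3) * σ ^ (2 - θ))) / σ ^ 2 := by
        apply div_le_div_of_nonneg_right _ (by positivity)
        have : 8 * M * (|y| + M) ^ 3 ≤ 8 * M * (4 * (|y| ^ mm + M ^ 3) * σ ^ (2 - θ)) :=
          mul_le_mul_of_nonneg_left hcube (by positivity)
        exact mul_le_mul_of_nonneg_left this (by positivity)
    _ = 16 * M * L₂ * (|y| ^ mm + M ^ 3) * σ ^ (-θ) := by
        rw [hsplit]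
        field_simp
        ring
    _ ≤ _ := by linarith

set_option maxHeartbeats 1000000 in
lemma caseB_aux {ψ : ℝ → ℝ} {ψ'0 L₁ L₂ ε M σ y A F : ℝ}
    (hε : 0 < ε) (hM : 0 < M)
    (hσ1 : (1:ℝ) ≤ σ) (hσ0 : (0:ℝ) < σ) (hMσ : 2 * M ≤ σ)
    (hψ'0 : ψ'0 < 0) (hL₂0 : 0 ≤ L₂) (hL₁0 : 0 ≤ L₁)
    (hL₁ : ∀ s t : ℝ, |ψ (s ^ 2) - ψ (t ^ 2)| ≤ L₁ * |s - t|)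
    {c₀ θ mm a b : ℝ}
    (hc₀def : c₀ = -ψ'0) (hθdef : θ = min ε 2)
    (hc₀ : 0 < c₀) (hθ0 : 0 < θ) (hθ2 : θ ≤ 2) (hθε : θ ≤ ε)
    (hσθ : (0:ℝ) ≤ σ ^ (-θ))
    (hab : |a - b| ≤ 2 * M) (haa : |a| ≤ |y| + M) (hbb : |b| ≤ |y| + M)
    (habsum : |a + b| ≤ 2 * |y| + 2 * M)
    (hy : σ / 2 ≤ |y|) :
    |σ ^ 2 * (ψ (a ^ 2 / σ ^ 2) - ψ (b ^ 2 / σ ^ 2)) - c₀ * (b ^ 2 - a ^ 2)| ≤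
      6 * M * (max (L₂ + -ψ'0) (L₁ / 2) + -ψ'0) * |2 * y| ^ (1 + ε) * σ ^ (-θ) +
        16 * M * L₂ * (|y| ^ mm + M ^ 3) * σ ^ (-θ) := by
  set L₃ : ℝ := max (L₂ + -ψ'0) (L₁ / 2) with hL₃def
  have hL₃c : L₂ + c₀ ≤ L₃ := by rw [hL₃def, hc₀def]; exact le_max_left _ _
  have hL₃L : L₁ / 2 ≤ L₃ := le_max_right _ _
  have hL₃0 : 0 ≤ L₃ := le_trans (by linarith) hL₃L
  have hMy : M ≤ |y| := le_trans (by linarith) hy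
  -- T1 : σ² |ψ u - ψ v| ≤ 2 M L₁ σ
  have hT1 : |ψ (a ^ 2 / σ ^ 2) - ψ (b ^ 2 / σ ^ 2)| ≤ L₁ * (2 * M) / σ := by
    have e1 : a ^ 2 / σ ^ 2 = (|a| / σ) ^ 2 := by
      rw [div_pow, sq_abs]
    have e2 : b ^ 2 / σ ^ 2 = (|b| / σ) ^ 2 := by
      rw [div_pow, sq_abs]
    rw [e1, e2]
    calc |ψ ((|a| / σ) ^ 2) - ψ ((|b| / σ) ^ 2)| ≤ L₁ * |(|a| / σ) - (|b| / σ)| :=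
          hL₁ _ _
      _ = L₁ * (|(|a| - |b|)| / σ) := by rw [div_sub_div_same, abs_div, abs_of_pos hσ0]
      _ ≤ L₁ * (|a - b| / σ) := by
          apply mul_le_mul_of_nonneg_left _ hL₁0
          apply div_le_div_of_nonneg_right _ hσ0.le
          exact abs_abs_sub_abs_le_abs_sub a b
      _ ≤ L₁ * (2 * M / σ) := by
          apply mul_le_mul_of_nonneg_left _ hL₁0
          exact div_le_div_of_nonneg_right hab hσ0.le
      _ = L₁ * (2 * M) / σ := by ring
  -- T2 : c₀ |b² - a²| ≤ 8 M c₀ |y|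
  have hT2 : |b ^ 2 - a ^ 2| ≤ 8 * M * |y| := by
    rw [show b ^ 2 - a ^ 2 = -((a - b) * (a + b)) by ring, abs_neg, abs_mul]
    calc |a - b| * |a + b| ≤ (2 * M) * (2 * |y| + 2 * M) :=
          mul_le_mul hab habsum (abs_nonneg _) (by linarith)
      _ ≤ (2 * M) * (4 * |y|) := by nlinarith
      _ = 8 * M * |y| := by ring
  -- rpow comparisons with z = 2|y|
  set z : ℝ := |2 * y| with hzdef
  have hz2 : z = 2 * |y| := by rw [hzdef, abs_mul]; norm_num
  have hσz : σ ≤ z := by rw [hz2]; linarith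
  have hz0 : 0 < z := lt_of_lt_of_le hσ0 hσz
  have hze : (0:ℝ) ≤ z ^ (1 + ε) := Real.rpow_nonneg hz0.le _
  have k3 : σ ^ (-ε) ≤ σ ^ (-θ) := Real.rpow_le_rpow_of_exponent_le hσ1 (by linarith)
  have k1 : σ ≤ z ^ (1 + ε) * σ ^ (-θ) := by
    have h1 : σ ^ ((1:ℝ) + ε) ≤ z ^ (1 + ε) := Real.rpow_le_rpow hσ0.le hσz (by linarith)
    have h2 : σ = σ ^ ((1:ℝ) + ε) * σ ^ (-ε) := by
      rw [← Real.rpow_add hσ0]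
      norm_num
    calc σ = σ ^ ((1:ℝ) + ε) * σ ^ (-ε) := h2
      _ ≤ z ^ (1 + ε) * σ ^ (-ε) := by
          apply mul_le_mul_of_nonneg_right h1 (Real.rpow_nonneg hσ0.le _)
      _ ≤ z ^ (1 + ε) * σ ^ (-θ) := mul_le_mul_of_nonneg_left k3 hze
  have k2 : z ≤ z ^ (1 + ε) * σ ^ (-θ) := by
    have h1 : z = z ^ ((1:ℝ) + ε) * z ^ (-ε) := by
      rw [← Real.rpow_add hz0]
      norm_num
    have h2 : z ^ (-ε) ≤ σ ^ (-ε) := Real.rpow_le_rpow_of_nonpos hσ0 hσz (by linarith)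
    calc z = z ^ ((1:ℝ) + ε) * z ^ (-ε) := h1
      _ ≤ z ^ (1 + ε) * σ ^ (-ε) := mul_le_mul_of_nonneg_left h2 hze
      _ ≤ z ^ (1 + ε) * σ ^ (-θ) := mul_le_mul_of_nonneg_left k3 hze
  -- assemble
  have hsecond : (0:ℝ) ≤ 16 * M * L₂ * (|y| ^ mm + M ^ 3) * σ ^ (-θ) := by
    have := Real.rpow_nonneg (abs_nonneg y) mm
    positivity
  have hbound : |σ ^ 2 * (ψ (a ^ 2 / σ ^ 2) - ψ (b ^ 2 / σ ^ 2)) - c₀ * (b ^ 2 - a ^ 2)| ≤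
      2 * M * L₁ * σ + 4 * M * c₀ * z := by
    calc |σ ^ 2 * (ψ (a ^ 2 / σ ^ 2) - ψ (b ^ 2 / σ ^ 2)) - c₀ * (b ^ 2 - a ^ 2)|
        ≤ |σ ^ 2 * (ψ (a ^ 2 / σ ^ 2) - ψ (b ^ 2 / σ ^ 2))| + |c₀ * (b ^ 2 - a ^ 2)| :=
          abs_sub _ _
      _ = σ ^ 2 * |ψ (a ^ 2 / σ ^ 2) - ψ (b ^ 2 / σ ^ 2)| + c₀ * |b ^ 2 - a ^ 2| := by
          rw [abs_mul, abs_mul, abs_of_pos (by positivity : (0:ℝ) < σ ^ 2),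
            abs_of_pos hc₀]
      _ ≤ σ ^ 2 * (L₁ * (2 * M) / σ) + c₀ * (8 * M * |y|) := by
          have h1 := mul_le_mul_of_nonneg_left hT1 (by positivity : (0:ℝ) ≤ σ ^ 2)
          have h2 := mul_le_mul_of_nonneg_left hT2 hc₀.le
          linarith
      _ = 2 * M * L₁ * σ + 4 * M * c₀ * z := by
          rw [hz2]
          field_simp
          ring
  calc |σ ^ 2 * (ψ (a ^ 2 / σ ^ 2) - ψ (b ^ 2 / σ ^ 2)) - c₀ * (b ^ 2 - a ^ 2)|
      ≤ 2 * M * L₁ * σ + 4 * M * c₀ * z := hbound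
    _ ≤ 2 * M * L₁ * (z ^ (1 + ε) * σ ^ (-θ)) + 4 * M * c₀ * (z ^ (1 + ε) * σ ^ (-θ)) := by
        have h1 := mul_le_mul_of_nonneg_left k1 (by positivity : (0:ℝ) ≤ 2 * M * L₁)
        have h2 := mul_le_mul_of_nonneg_left k2 (by positivity : (0:ℝ) ≤ 4 * M * c₀)
        linarith
    _ ≤ 6 * M * (L₃ + c₀) * (z ^ (1 + ε) * σ ^ (-θ)) := by
        have hP : (0:ℝ) ≤ z ^ (1 + ε) * σ ^ (-θ) := mul_nonneg hze hσθ
        have hco : 2 * M * L₁ + 4 * M * c₀ ≤ 6 * M * (L₃ + c₀) := by nlinarith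
        nlinarith
    _ = 6 * M * (L₃ + -ψ'0) * z ^ (1 + ε) * σ ^ (-θ) := by rw [← hc₀def]; ring
    _ ≤ _ := by linarith


lemma pointwise_aux {ψ : ℝ → ℝ} {ψ'0 L₁ L₂ ε M σ : ℝ} (y A F : ℝ)
    (hε : 0 < ε) (hM : 0 < M) (hσ : max (2 * M) 1 ≤ σ)
    (hA : |A| ≤ M) (hF : |F| ≤ M)
    (hψ'0 : ψ'0 < 0) (hL₂0 : 0 ≤ L₂) (hL₁0 : 0 ≤ L₁)
    (htaylor : ∀ u ∈ Set.Ico (0:ℝ) 1, ∀ v ∈ Set.Ico (0:ℝ) 1,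
      |ψ u - ψ v - ψ'0 * (u - v)| ≤ L₂ / 2 * |u ^ 2 - v ^ 2|)
    (hL₁ : ∀ s t : ℝ, |ψ (s ^ 2) - ψ (t ^ 2)| ≤ L₁ * |s - t|) :
    |σ ^ 2 * (ψ ((y - A) ^ 2 / σ ^ 2) - ψ ((y - F) ^ 2 / σ ^ 2)) -
        (-ψ'0) * ((y - F) ^ 2 - (y - A) ^ 2)| ≤
      6 * M * (max (L₂ + -ψ'0) (L₁ / 2) + -ψ'0) * |2 * y| ^ (1 + ε) * σ ^ (-min ε 2) +
        16 * M * L₂ * (|y| ^ min (1 + ε) 3 + M ^ 3) * σ ^ (-min ε 2) := by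
  have hσ1 : (1:ℝ) ≤ σ := le_trans (le_max_right _ _) hσ
  have hσ0 : (0:ℝ) < σ := lt_of_lt_of_le one_pos hσ1
  have hMσ : 2 * M ≤ σ := le_trans (le_max_left _ _) hσ
  have hc₀ : (0:ℝ) < -ψ'0 := by linarith
  have hθ0 : 0 < min ε 2 := lt_min hε two_pos
  have hθ2 : min ε 2 ≤ 2 := min_le_right _ _
  have hθε : min ε 2 ≤ ε := min_le_left _ _
  have hmm1 : 1 ≤ min (1 + ε) 3 := le_min (by linarith) (by norm_num)
  have hmm3mm : 3 - min (1 + ε) 3 = 2 - min ε 2 := by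
    rcases le_total ε 2 with h | h
    · rw [min_eq_left (by linarith : ε ≤ 2), min_eq_left (by linarith : 1 + ε ≤ 3)]
      ring
    · rw [min_eq_right (by linarith : (2:ℝ) ≤ ε), min_eq_right (by linarith : (3:ℝ) ≤ 1 + ε)]
      norm_num
  have hσθ : (0:ℝ) ≤ σ ^ (-min ε 2) := Real.rpow_nonneg hσ0.le _
  have hab : |(y - A) - (y - F)| ≤ 2 * M := by
    rw [show (y - A) - (y - F) = F - A by ring]
    calc |F - A| ≤ |F| + |A| := abs_sub _ _
      _ ≤ 2 * M := by linarith
  have haa : |y - A| ≤ |y| + M := by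
    calc |y - A| ≤ |y| + |A| := abs_sub _ _
      _ ≤ |y| + M := by linarith
  have hbb : |y - F| ≤ |y| + M := by
    calc |y - F| ≤ |y| + |F| := abs_sub _ _
      _ ≤ |y| + M := by linarith
  have habsum : |(y - A) + (y - F)| ≤ 2 * |y| + 2 * M := by
    calc |(y - A) + (y - F)| ≤ |y - A| + |y - F| := abs_add_le _ _
      _ ≤ 2 * |y| + 2 * M := by linarith
  rcases lt_or_ge (|y|) (σ / 2) with hy | hy
  · exact caseA_aux hε hM hσ1 hσ0 hMσ hA hF hψ'0 hL₂0 hL₁0 htaylor rfl rfl rfl hc₀ hθ0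
      hθ2 hθε hmm1 hmm3mm hσθ rfl rfl hab haa hbb habsum hy
  · exact caseB_aux (A := A) (F := F) hε hM hσ1 hσ0 hMσ hψ'0 hL₂0 hL₁0 hL₁ rfl rfl hc₀ hθ0 hθ2 hθε hσθ
      hab haa hbb habsum hy
end AuxStmt13

set_option maxHeartbeats 1000000 in
/-- Asymptotic mean calibration: for `f* = E(Y|X)` bounded by `M`,
`E|Y|^{1+ε} < ∞`, `σ ≥ max(2M,1)`, and a strongly mean-calibrated gain
`p_σ(t) = ψ(t²/σ²)` with `c₀ = -ψ'(0)`, every measurable `f` with `‖f‖_∞ ≤ M`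
satisfies `|σ²[𝒢_σ(f*) - 𝒢_σ(f)] - c₀‖f - f*‖²_{2,ρ}| ≤ c_ε σ^{-θ_ε}`. -/
theorem stmt13 {Ω 𝒳 : Type*} [MeasurableSpace Ω] [MeasurableSpace 𝒳]
    (μ : Measure Ω) [IsProbabilityMeasure μ]
    (X : Ω → 𝒳) (Y : Ω → ℝ) (hX : Measurable X) (hY : Measurable Y)
    (fstar : 𝒳 → ℝ) (hfstar : Measurable fstar)
    (hcond : (fun ω => fstar (X ω)) =ᵐ[μ] μ[Y | MeasurableSpace.comap X inferInstance])
    (ψ ψ' : ℝ → ℝ) (hψmeas : Measurable ψ)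
    (ε M L₁ L₂ σ : ℝ) (hε : 0 < ε) (hM : 0 < M) (hσ : max (2 * M) 1 ≤ σ)
    (hfstarM : ∀ x, |fstar x| ≤ M)
    (hψ_nonneg : ∀ t, 0 ≤ t → 0 ≤ ψ t)
    (hψ_anti : ∀ u v : ℝ, 0 ≤ u → u ≤ v → ψ v ≤ ψ u)
    (hL₁ : ∀ s t : ℝ, |ψ (s ^ 2) - ψ (t ^ 2)| ≤ L₁ * |s - t|)
    (hderiv : ∀ t ∈ Set.Ico (0 : ℝ) 1,
      HasDerivWithinAt ψ (ψ' t) (Set.Ico (0 : ℝ) 1) t)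
    (hψ'0 : ψ' 0 < 0)
    (hL₂ : ∀ s ∈ Set.Ico (0 : ℝ) 1, ∀ t ∈ Set.Ico (0 : ℝ) 1,
      |ψ' s - ψ' t| ≤ L₂ * |s - t|)
    (hmom : Integrable (fun ω => |Y ω| ^ (1 + ε)) μ) :
    ∀ f : 𝒳 → ℝ, Measurable f → (∀ x, |f x| ≤ M) →
      |σ ^ 2 * ((∫ ω, ψ ((Y ω - fstar (X ω)) ^ 2 / σ ^ 2) ∂μ) -
              ∫ ω, ψ ((Y ω - f (X ω)) ^ 2 / σ ^ 2) ∂μ) -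
          (-ψ' 0) * ∫ ω, (f (X ω) - fstar (X ω)) ^ 2 ∂μ| ≤
        (6 * M * (max (L₂ + (-ψ' 0)) (L₁ / 2) + (-ψ' 0)) *
              (∫ ω, |2 * Y ω| ^ (1 + ε) ∂μ) +
            16 * M * L₂ * ((∫ ω, |Y ω| ^ min (1 + ε) 3 ∂μ) + M ^ 3)) *
          σ ^ (-min ε 2) := by
  intro f hf hfM
  have hσ1 : (1:ℝ) ≤ σ := le_trans (le_max_right _ _) hσ
  have hσ0 : (0:ℝ) < σ := lt_of_lt_of_le one_pos hσ1
  have hL₁0 : 0 ≤ L₁ := by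
    have h := hL₁ 1 0
    norm_num at h
    exact le_trans (abs_nonneg _) h
  have hL₂0 : 0 ≤ L₂ := by
    have h := hL₂ (1/2) ⟨by norm_num, by norm_num⟩ 0 ⟨le_rfl, one_pos⟩
    rw [show |(1:ℝ)/2 - 0| = 1/2 by norm_num] at h
    nlinarith [abs_nonneg (ψ' (1/2) - ψ' 0)]
  have htaylor := taylor_aux hderiv hL₂
  have hm : MeasurableSpace.comap X inferInstance ≤ ‹MeasurableSpace Ω› := hX.comap_le
  -- measurability
  have hfX : Measurable fun ω => f (X ω) := hf.comp hX
  have hfsX : Measurable fun ω => fstar (X ω) := hfstar.comp hX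
  have hg₁m : Measurable fun ω => ψ ((Y ω - fstar (X ω)) ^ 2 / σ ^ 2) :=
    hψmeas.comp (((hY.sub hfsX).pow_const 2).div_const _)
  have hg₂m : Measurable fun ω => ψ ((Y ω - f (X ω)) ^ 2 / σ ^ 2) :=
    hψmeas.comp (((hY.sub hfX).pow_const 2).div_const _)
  -- integrability of the ψ terms
  have hψbd : ∀ t : ℝ, 0 ≤ t → ‖ψ t‖ ≤ ψ 0 := fun t ht => by
    rw [Real.norm_eq_abs, abs_of_nonneg (hψ_nonneg t ht)]
    exact hψ_anti 0 t le_rfl ht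
  have hg₁i : Integrable (fun ω => ψ ((Y ω - fstar (X ω)) ^ 2 / σ ^ 2)) μ := by
    apply Integrable.mono' (integrable_const (ψ 0)) hg₁m.aestronglyMeasurable
    filter_upwards with ω
    exact hψbd _ (by positivity)
  have hg₂i : Integrable (fun ω => ψ ((Y ω - f (X ω)) ^ 2 / σ ^ 2)) μ := by
    apply Integrable.mono' (integrable_const (ψ 0)) hg₂m.aestronglyMeasurable
    filter_upwards with ω
    exact hψbd _ (by positivity)
  -- Y is integrable
  have hYi : Integrable Y μ := by
    apply Integrable.mono' ((integrable_const (1:ℝ)).add hmom) hY.aestronglyMeasurable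
    filter_upwards with ω
    rw [Real.norm_eq_abs]
    show |Y ω| ≤ 1 + |Y ω| ^ (1 + ε)
    rcases le_total (|Y ω|) 1 with h | h
    · have : (0:ℝ) ≤ |Y ω| ^ (1 + ε) := Real.rpow_nonneg (abs_nonneg _) _
      linarith
    · have h1 : |Y ω| ^ (1:ℝ) ≤ |Y ω| ^ (1 + ε) :=
        Real.rpow_le_rpow_of_exponent_le h (by linarith)
      rw [Real.rpow_one] at h1
      linarith
  -- bounds on the difference function
  have hDb : ∀ ω, |f (X ω) - fstar (X ω)| ≤ 2 * M := fun ω => by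
    calc |f (X ω) - fstar (X ω)| ≤ |f (X ω)| + |fstar (X ω)| := abs_sub _ _
      _ ≤ 2 * M := by linarith [hfM (X ω), hfstarM (X ω)]
  have hDY : Integrable (fun ω => (f (X ω) - fstar (X ω)) * Y ω) μ := by
    apply Integrable.mono' (hYi.abs.const_mul (2 * M))
      ((hfX.sub hfsX).mul hY).aestronglyMeasurable
    filter_upwards with ω
    rw [Real.norm_eq_abs, Pi.mul_apply, abs_mul]
    exact mul_le_mul_of_nonneg_right (hDb ω) (abs_nonneg _)
  have hDfs : Integrable (fun ω => (f (X ω) - fstar (X ω)) * fstar (X ω)) μ := by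
    apply Integrable.mono' (integrable_const (2 * M * M))
      ((hfX.sub hfsX).mul hfsX).aestronglyMeasurable
    filter_upwards with ω
    rw [Real.norm_eq_abs, Pi.mul_apply, abs_mul]
    exact mul_le_mul (hDb ω) (hfstarM _) (abs_nonneg _) (by linarith)
  have hD2 : Integrable (fun ω => (f (X ω) - fstar (X ω)) ^ 2) μ := by
    apply Integrable.mono' (integrable_const ((2 * M) ^ 2))
      ((hfX.sub hfsX).pow_const 2).aestronglyMeasurable
    filter_upwards with ω
    rw [Real.norm_eq_abs, abs_pow, ← sq_abs]
    exact pow_le_pow_left₀ (abs_nonneg _) (by rw [abs_abs]; exact hDb ω) 2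
  have hbsq : Integrable
      (fun ω => (Y ω - f (X ω)) ^ 2 - (Y ω - fstar (X ω)) ^ 2) μ := by
    have e : (fun ω => (Y ω - f (X ω)) ^ 2 - (Y ω - fstar (X ω)) ^ 2) =
        fun ω => (f (X ω) - fstar (X ω)) ^ 2 - 2 * ((f (X ω) - fstar (X ω)) * Y ω) +
          2 * ((f (X ω) - fstar (X ω)) * fstar (X ω)) := funext fun ω => by ring
    rw [e]
    exact (hD2.sub (hDY.const_mul 2)).add (hDfs.const_mul 2)
  -- conditional expectation: ∫ D·Y = ∫ D·f*(X)
  have hXm : Measurable[MeasurableSpace.comap X inferInstance] X :=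
    measurable_iff_comap_le.mpr le_rfl
  have hDsm : StronglyMeasurable[MeasurableSpace.comap X inferInstance]
      (fun ω => f (X ω) - fstar (X ω)) :=
    ((hf.comp hXm).sub (hfstar.comp hXm)).stronglyMeasurable
  have hpull := condExp_stronglyMeasurable_mul_of_bound hm hDsm hYi (2 * M)
    (Filter.Eventually.of_forall fun ω => by rw [Real.norm_eq_abs]; exact hDb ω)
  have hzero : ∫ ω, (f (X ω) - fstar (X ω)) * Y ω ∂μ =
      ∫ ω, (f (X ω) - fstar (X ω)) * fstar (X ω) ∂μ := by
    have e1 : ∫ ω, (f (X ω) - fstar (X ω)) * Y ω ∂μ =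
        ∫ ω, ((fun ω' => f (X ω') - fstar (X ω')) * Y) ω ∂μ := rfl
    rw [e1, ← integral_condExp hm, integral_congr_ae hpull]
    apply integral_congr_ae
    filter_upwards [hcond] with ω h
    simp only [Pi.mul_apply]
    rw [← h]
  have hkey : ∫ ω, ((Y ω - f (X ω)) ^ 2 - (Y ω - fstar (X ω)) ^ 2) ∂μ =
      ∫ ω, (f (X ω) - fstar (X ω)) ^ 2 ∂μ := by
    have e : (fun ω => (Y ω - f (X ω)) ^ 2 - (Y ω - fstar (X ω)) ^ 2) =
        fun ω => (f (X ω) - fstar (X ω)) ^ 2 - 2 * ((f (X ω) - fstar (X ω)) * Y ω) +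
          2 * ((f (X ω) - fstar (X ω)) * fstar (X ω)) := funext fun ω => by ring
    have hI2 : Integrable (fun ω => 2 * ((f (X ω) - fstar (X ω)) * Y ω)) μ :=
      hDY.const_mul 2
    have hI1 : Integrable (fun ω => (f (X ω) - fstar (X ω)) ^ 2 -
        2 * ((f (X ω) - fstar (X ω)) * Y ω)) μ := by exact hD2.sub hI2
    have hI3 : Integrable (fun ω => 2 * ((f (X ω) - fstar (X ω)) * fstar (X ω))) μ :=
      hDfs.const_mul 2
    rw [e, integral_add hI1 hI3, integral_sub hD2 hI2, integral_const_mul,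
      integral_const_mul, hzero]
    ring
  -- representation of the LHS as a single integral
  have hrepr : σ ^ 2 * ((∫ ω, ψ ((Y ω - fstar (X ω)) ^ 2 / σ ^ 2) ∂μ) -
      ∫ ω, ψ ((Y ω - f (X ω)) ^ 2 / σ ^ 2) ∂μ) -
      (-ψ' 0) * ∫ ω, (f (X ω) - fstar (X ω)) ^ 2 ∂μ =
      ∫ ω, (σ ^ 2 * (ψ ((Y ω - fstar (X ω)) ^ 2 / σ ^ 2) -
        ψ ((Y ω - f (X ω)) ^ 2 / σ ^ 2)) -
        (-ψ' 0) * ((Y ω - f (X ω)) ^ 2 - (Y ω - fstar (X ω)) ^ 2)) ∂μ := by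
    have hgd : Integrable (fun ω => ψ ((Y ω - fstar (X ω)) ^ 2 / σ ^ 2) -
        ψ ((Y ω - f (X ω)) ^ 2 / σ ^ 2)) μ := by exact hg₁i.sub hg₂i
    have hJ1 : Integrable (fun ω => σ ^ 2 * (ψ ((Y ω - fstar (X ω)) ^ 2 / σ ^ 2) -
        ψ ((Y ω - f (X ω)) ^ 2 / σ ^ 2))) μ := hgd.const_mul _
    have hJ2 : Integrable (fun ω => (-ψ' 0) *
        ((Y ω - f (X ω)) ^ 2 - (Y ω - fstar (X ω)) ^ 2)) μ := hbsq.const_mul _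
    rw [integral_sub hJ1 hJ2, integral_const_mul, integral_const_mul,
      integral_sub hg₁i hg₂i, hkey]
  -- integrability of the dominating function
  have h2Yi : Integrable (fun ω => |2 * Y ω| ^ (1 + ε)) μ := by
    have e : (fun ω => |2 * Y ω| ^ (1 + ε)) =
        fun ω => (2:ℝ) ^ ((1:ℝ) + ε) * |Y ω| ^ (1 + ε) := funext fun ω => by
      rw [abs_mul, Real.mul_rpow (by norm_num) (abs_nonneg _), abs_two]
    rw [e]
    exact hmom.const_mul _
  have hmm0 : (0:ℝ) ≤ min (1 + ε) 3 := le_min (by linarith) (by norm_num)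
  have hYmi : Integrable (fun ω => |Y ω| ^ min (1 + ε) 3) μ := by
    apply Integrable.mono' ((integrable_const (1:ℝ)).add hmom)
      ((Real.continuous_rpow_const hmm0).measurable.comp hY.abs).aestronglyMeasurable
    filter_upwards with ω
    simp only [Function.comp_apply, Pi.add_apply, Real.norm_eq_abs]
    rw [abs_of_nonneg (Real.rpow_nonneg (abs_nonneg _) _)]
    rcases le_total (|Y ω|) 1 with h | h
    · have h1 : |Y ω| ^ min (1 + ε) 3 ≤ 1 := Real.rpow_le_one (abs_nonneg _) h hmm0
      have : (0:ℝ) ≤ |Y ω| ^ (1 + ε) := Real.rpow_nonneg (abs_nonneg _) _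
      linarith
    · have h1 : |Y ω| ^ min (1 + ε) 3 ≤ |Y ω| ^ (1 + ε) :=
        Real.rpow_le_rpow_of_exponent_le h (min_le_left _ _)
      linarith
  have hB1 : Integrable (fun ω =>
      6 * M * (max (L₂ + -ψ' 0) (L₁ / 2) + -ψ' 0) * |2 * Y ω| ^ (1 + ε) * σ ^ (-min ε 2)) μ := by
    exact (h2Yi.const_mul _).mul_const _
  have hsum : Integrable (fun ω => |Y ω| ^ min (1 + ε) 3 + M ^ 3) μ := by
    exact hYmi.add (integrable_const _)
  have hB2 : Integrable (fun ω =>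
      16 * M * L₂ * (|Y ω| ^ min (1 + ε) 3 + M ^ 3) * σ ^ (-min ε 2)) μ := by
    exact (hsum.const_mul _).mul_const _
  have hBint : Integrable (fun ω =>
      6 * M * (max (L₂ + -ψ' 0) (L₁ / 2) + -ψ' 0) * |2 * Y ω| ^ (1 + ε) * σ ^ (-min ε 2) +
      16 * M * L₂ * (|Y ω| ^ min (1 + ε) 3 + M ^ 3) * σ ^ (-min ε 2)) μ := by
    exact hB1.add hB2
  -- pointwise bound
  have hptw : ∀ ω, ‖σ ^ 2 * (ψ ((Y ω - fstar (X ω)) ^ 2 / σ ^ 2) -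
      ψ ((Y ω - f (X ω)) ^ 2 / σ ^ 2)) -
      (-ψ' 0) * ((Y ω - f (X ω)) ^ 2 - (Y ω - fstar (X ω)) ^ 2)‖ ≤
      6 * M * (max (L₂ + -ψ' 0) (L₁ / 2) + -ψ' 0) * |2 * Y ω| ^ (1 + ε) * σ ^ (-min ε 2) +
      16 * M * L₂ * (|Y ω| ^ min (1 + ε) 3 + M ^ 3) * σ ^ (-min ε 2) := fun ω => by
    rw [Real.norm_eq_abs]
    exact pointwise_aux (Y ω) (fstar (X ω)) (f (X ω)) hε hM hσ (hfstarM _) (hfM _)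
      hψ'0 hL₂0 hL₁0 htaylor hL₁
  -- final computation of the integral of the bound
  have hBval : ∫ ω, (6 * M * (max (L₂ + -ψ' 0) (L₁ / 2) + -ψ' 0) * |2 * Y ω| ^ (1 + ε) *
        σ ^ (-min ε 2) +
      16 * M * L₂ * (|Y ω| ^ min (1 + ε) 3 + M ^ 3) * σ ^ (-min ε 2)) ∂μ =
      (6 * M * (max (L₂ + (-ψ' 0)) (L₁ / 2) + (-ψ' 0)) *
          (∫ ω, |2 * Y ω| ^ (1 + ε) ∂μ) +
        16 * M * L₂ * ((∫ ω, |Y ω| ^ min (1 + ε) 3 ∂μ) + M ^ 3)) * σ ^ (-min ε 2) := by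
    rw [integral_add hB1 hB2, integral_mul_const, integral_const_mul,
      integral_mul_const, integral_const_mul, integral_add hYmi (integrable_const _),
      integral_const, probReal_univ, one_smul]
    ring
  rw [hrepr, ← hBval, ← Real.norm_eq_abs]
  exact norm_integral_le_of_norm_le hBint (Filter.Eventually.of_forall hptw)
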